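/- Trahan's Cauchy-type theorem: Let f, g : ℝ → ℝ be differentiable at every point of the closed interval [a,b] (with a < b), suppose g'(x) ≠ 0 for every x ∈ [a,b] (so that g is strictly monotone and in particular g(a) ≠ g(b)), and suppose (f'(a)/g'(a) - (f(b)-f(a))/(g(b)-g(a))) · ( ((g(b)-g(a))/(b-a)) · f'(b) - ((f(b)-f(a))/(b-a)) · g'(b) ) ≥ 0. Then there exists a point η ∈ (a,b] such that f'(η)/g'(η) = (f(η) - f(a))/(g(η) - g(a)). -/

import Mathlib

open Set Filter Topology

lemma trahan_aux (f f' g g' : ℝ → ℝ) (a b : ℝ) (hab : a < b)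
    (hf : ∀ x ∈ Set.Icc a b, HasDerivWithinAt f (f' x) (Set.Icc a b) x)
    (hg : ∀ x ∈ Set.Icc a b, HasDerivWithinAt g (g' x) (Set.Icc a b) x)
    (hgpos : ∀ x ∈ Set.Icc a b, 0 < g' x)
    (hcond : (f' a / g' a - (f b - f a) / (g b - g a)) *
        ((g b - g a) / (b - a) * f' b - (f b - f a) / (b - a) * g' b) ≥ 0) :
    ∃ η ∈ Set.Ioc a b, f' η / g' η = (f η - f a) / (g η - g a) := by
  classical
  have haI : a ∈ Icc a b := ⟨le_rfl, hab.le⟩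
  have hbI : b ∈ Icc a b := ⟨hab.le, le_rfl⟩
  have hba : (0:ℝ) < b - a := sub_pos.2 hab
  have gcont : ContinuousOn g (Icc a b) := fun x hx => (hg x hx).continuousWithinAt
  have gmono : StrictMonoOn g (Icc a b) := by
    apply strictMonoOn_of_deriv_pos (convex_Icc a b) gcont
    intro x hx
    rw [interior_Icc] at hx
    have hx' : x ∈ Icc a b := Ioo_subset_Icc_self hx
    have hd : HasDerivAt g (g' x) x := (hg x hx').hasDerivAt (Icc_mem_nhds hx.1 hx.2)
    rw [hd.deriv]; exact hgpos x hx'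
  have hgb : 0 < g b - g a := sub_pos.2 (gmono haI hbI hab)
  have hgx : ∀ x ∈ Ioc a b, 0 < g x - g a := fun x hx =>
    sub_pos.2 (gmono haI ⟨hx.1.le, hx.2⟩ hx.1)
  set A : ℝ := f' a * (g b - g a) - (f b - f a) * g' a with hA
  set B : ℝ := f' b * (g b - g a) - (f b - f a) * g' b with hB
  have hAB : 0 ≤ A * B := by
    have hga : g' a ≠ 0 := (hgpos a haI).ne'
    have h1 : (f' a / g' a - (f b - f a) / (g b - g a)) *
        ((g b - g a) / (b - a) * f' b - (f b - f a) / (b - a) * g' b)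
        = A * B / (g' a * (g b - g a) * (b - a)) := by
      rw [hA, hB]
      field_simp
    rw [h1] at hcond
    have hd : (0:ℝ) < g' a * (g b - g a) * (b - a) :=
      mul_pos (mul_pos (hgpos a haI) hgb) hba
    have h2 : 0 ≤ A * B / (g' a * (g b - g a) * (b - a)) * (g' a * (g b - g a) * (b - a)) :=
      mul_nonneg hcond hd.le
    rwa [div_mul_cancel₀ _ hd.ne'] at h2
  set p : ℝ → ℝ := fun x => (f x - f a) * (g b - g a) - (g x - g a) * (f b - f a) with hp
  set p' : ℝ → ℝ := fun x => f' x * (g b - g a) - g' x * (f b - f a) with hp'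
  have hpd : ∀ x ∈ Icc a b, HasDerivWithinAt p (p' x) (Icc a b) x := by
    intro x hx
    have := (((hf x hx).sub_const (f a)).mul_const (g b - g a)).sub
      (((hg x hx).sub_const (g a)).mul_const (f b - f a))
    exact this
  have pa : p a = 0 := by simp [hp]
  have pb : p b = 0 := by simp only [hp]; ring
  set k : ℝ → ℝ := fun x => f' x * (g x - g a) - g' x * (f x - f a) with hk'
  by_cases hk : ∃ η ∈ Ioc a b, f' η * (g η - g a) = g' η * (f η - f a)
  · obtain ⟨η, hη, he⟩ := hk
    refine ⟨η, hη, ?_⟩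
    rw [div_eq_div_iff (hgpos η (Ioc_subset_Icc_self hη)).ne' (hgx η hη).ne']
    rw [he]; ring
  exfalso
  push_neg at hk
  have hknz : ∀ x ∈ Ioc a b, k x ≠ 0 := fun x hx => sub_ne_zero.2 (hk x hx)
  set H : ℝ → ℝ := fun x => if x = a then A / g' a else p x / (g x - g a) with hH
  set D : ℝ → ℝ := fun x => (p' x * (g x - g a) - p x * g' x) / (g x - g a) ^ 2 with hD
  have hDk : ∀ x, p' x * (g x - g a) - p x * g' x = (g b - g a) * k x := by
    intro x; simp only [hp, hp', hk']; ring
  have hHd : ∀ x ∈ Ioc a b, HasDerivWithinAt H (D x) (Icc a b) x := by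
    intro x hx
    have hx' : x ∈ Icc a b := Ioc_subset_Icc_self hx
    have hq : HasDerivWithinAt (fun y => p y / (g y - g a)) (D x) (Icc a b) x := by
      exact (hpd x hx').div ((hg x hx').sub_const (g a)) (hgx x hx).ne'
    apply hq.congr_of_eventuallyEq
    · have hnb : ∀ᶠ y in 𝓝[Icc a b] x, y ≠ a :=
        ((isOpen_compl_singleton.eventually_mem (by
          simpa using hx.1.ne' : x ∈ ({a}ᶜ : Set ℝ))).filter_mono nhdsWithin_le_nhds)
      filter_upwards [hnb] with y hy
      simp only [hH, if_neg hy]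
    · simp only [hH, if_neg hx.1.ne']
  -- constant sign of k on (a, b]
  have hdarb : ∀ u ∈ Ioc a b, ∀ v ∈ Ioc a b, u < v → D u < 0 → 0 < D v ∨ D v < 0 → True := fun _ _ _ _ _ _ _ => trivial
  have hsign : (∀ x ∈ Ioc a b, 0 < k x) ∨ (∀ x ∈ Ioc a b, k x < 0) := by
    have hDsign : ∀ x ∈ Ioc a b, (0 < k x → 0 < D x) ∧ (k x < 0 → D x < 0) := by
      intro x hx
      constructor
      · intro h
        rw [hD]; simp only
        exact div_pos (by rw [hDk]; exact mul_pos hgb h) (pow_pos (hgx x hx) 2)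
      · intro h
        rw [hD]; simp only
        exact div_neg_of_neg_of_pos (by rw [hDk]; exact mul_neg_of_pos_of_neg hgb h)
          (pow_pos (hgx x hx) 2)
    have key : ∀ u ∈ Ioc a b, ∀ v ∈ Ioc a b, u < v → ¬ (k u < 0 ∧ 0 < k v) ∧ ¬ (0 < k u ∧ k v < 0) := by
      intro u hu v hv huv
      have hsub : Icc u v ⊆ Icc a b := Icc_subset_Icc hu.1.le hv.2
      have hder : ∀ x ∈ Icc u v, HasDerivWithinAt H (D x) (Icc u v) x := by
        intro x hx
        exact (hHd x ⟨lt_of_lt_of_le hu.1 hx.1, le_trans hx.2 hv.2⟩).mono hsub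
      have memIoc : ∀ c ∈ Ioo u v, c ∈ Ioc a b := fun c hc =>
        ⟨lt_trans hu.1 hc.1, le_trans hc.2.le hv.2⟩
      constructor
      · rintro ⟨h1, h2⟩
        obtain ⟨c, hc, hc0⟩ := exists_hasDerivWithinAt_eq_of_gt_of_lt huv.le hder
          ((hDsign u hu).2 h1) ((hDsign v hv).1 h2)
        have : k c ≠ 0 := hknz c (memIoc c hc)
        rcases lt_trichotomy (k c) 0 with h | h | h
        · exact absurd hc0 (ne_of_lt ((hDsign c (memIoc c hc)).2 h))
        · exact this h
        · exact absurd hc0 (ne_of_gt ((hDsign c (memIoc c hc)).1 h))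
      · rintro ⟨h1, h2⟩
        obtain ⟨c, hc, hc0⟩ := exists_hasDerivWithinAt_eq_of_lt_of_gt huv.le hder
          ((hDsign u hu).1 h1) ((hDsign v hv).2 h2)
        have : k c ≠ 0 := hknz c (memIoc c hc)
        rcases lt_trichotomy (k c) 0 with h | h | h
        · exact absurd hc0 (ne_of_lt ((hDsign c (memIoc c hc)).2 h))
        · exact this h
        · exact absurd hc0 (ne_of_gt ((hDsign c (memIoc c hc)).1 h))
    by_contra hcon
    push_neg at hcon
    obtain ⟨⟨u, hu, hu'⟩, ⟨v, hv, hv'⟩⟩ := hcon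
    have hku : k u < 0 := lt_of_le_of_ne hu' (hknz u hu)
    have hkv : 0 < k v := hv'.lt_of_ne (Ne.symm (hknz v hv))
    rcases lt_trichotomy u v with h | h | h
    · exact ((key u hu v hv h).1) ⟨hku, hkv⟩
    · rw [h] at hku; linarith
    · exact ((key v hv u hu h).2) ⟨hkv, hku⟩
  -- continuity of H on [a, b]
  have hcont : ContinuousOn H (Icc a b) := by
    intro x hx
    rcases eq_or_ne x a with rfl | hxa
    · rw [← continuousWithinAt_diff_self]
      have hps : Tendsto (slope p x) (𝓝[Icc x b \ {x}] x) (𝓝 (p' x)) :=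
        hasDerivWithinAt_iff_tendsto_slope.1 (hpd x hx)
      have hgs : Tendsto (slope g x) (𝓝[Icc x b \ {x}] x) (𝓝 (g' x)) :=
        hasDerivWithinAt_iff_tendsto_slope.1 (hg x hx)
      have hdiv : Tendsto (fun y => slope p x y / slope g x y) (𝓝[Icc x b \ {x}] x)
          (𝓝 (p' x / g' x)) := hps.div hgs (hgpos x hx).ne'
      have heq : ∀ᶠ y in 𝓝[Icc x b \ {x}] x, slope p x y / slope g x y = H y := by
        filter_upwards [self_mem_nhdsWithin] with y hy
        have hya : y ≠ x := by simpa using hy.2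
        have hyIoc : y ∈ Ioc x b := ⟨lt_of_le_of_ne hy.1.1 (Ne.symm hya), hy.1.2⟩
        simp only [hH, if_neg hya]
        rw [slope_def_field, slope_def_field, pa]
        have h1 : y - x ≠ 0 := sub_ne_zero.2 hya
        have h2 : g y - g x ≠ 0 := (hgx y hyIoc).ne'
        field_simp
        ring
      have hval : p' x / g' x = H x := by
        simp only [hH, if_pos rfl, hp', hA]
        ring_nf
      rw [hval] at hdiv
      exact hdiv.congr' heq
    · have hxI : x ∈ Ioc a b := ⟨lt_of_le_of_ne hx.1 (Ne.symm hxa), hx.2⟩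
      have hq : ContinuousWithinAt (fun y => p y / (g y - g a)) (Icc a b) x :=
        ((hpd x hx).continuousWithinAt).div ((gcont x hx).sub continuousWithinAt_const)
          (hgx x hxI).ne'
      apply hq.congr_of_eventuallyEq
      · have hnb : ∀ᶠ y in 𝓝[Icc a b] x, y ≠ a :=
          ((isOpen_compl_singleton.eventually_mem (by
            simpa using hxa : x ∈ ({a}ᶜ : Set ℝ))).filter_mono nhdsWithin_le_nhds)
        filter_upwards [hnb] with y hy
        simp only [hH, if_neg hy]
      · simp only [hH, if_neg hxa]
  have hHa : H a = A / g' a := by simp only [hH, if_pos rfl]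
  have hHb : H b = 0 := by simp only [hH, if_neg hab.ne', pb, zero_div]
  have hBk : B = k b := by simp only [hB, hk']; ring
  rcases hsign with hpos | hneg
  · have hmono : StrictMonoOn H (Icc a b) := by
      apply strictMonoOn_of_deriv_pos (convex_Icc a b) hcont
      intro x hx
      rw [interior_Icc] at hx
      have hx' : x ∈ Ioc a b := ⟨hx.1, hx.2.le⟩
      have hd : HasDerivAt H (D x) x := (hHd x hx').hasDerivAt (Icc_mem_nhds hx.1 hx.2)
      rw [hd.deriv, hD]
      exact div_pos (by rw [hDk]; exact mul_pos hgb (hpos x hx')) (pow_pos (hgx x hx') 2)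
    have h1 : H a < H b := hmono haI hbI hab
    rw [hHa, hHb] at h1
    have hAneg : A < 0 := by
      rcases div_neg_iff.1 h1 with h | h
      · linarith [hgpos a haI]
      · exact h.1
    have hBpos : 0 < B := by rw [hBk]; exact hpos b ⟨hab, le_rfl⟩
    exact absurd hAB (not_le.2 (mul_neg_of_neg_of_pos hAneg hBpos))
  · have hmono : StrictAntiOn H (Icc a b) := by
      apply strictAntiOn_of_deriv_neg (convex_Icc a b) hcont
      intro x hx
      rw [interior_Icc] at hx
      have hx' : x ∈ Ioc a b := ⟨hx.1, hx.2.le⟩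
      have hd : HasDerivAt H (D x) x := (hHd x hx').hasDerivAt (Icc_mem_nhds hx.1 hx.2)
      rw [hd.deriv, hD]
      exact div_neg_of_neg_of_pos (by rw [hDk]; exact mul_neg_of_pos_of_neg hgb (hneg x hx'))
        (pow_pos (hgx x hx') 2)
    have h1 : H b < H a := hmono haI hbI hab
    rw [hHa, hHb] at h1
    have hApos : 0 < A := by
      rcases div_pos_iff.1 h1 with h | h
      · exact h.1
      · linarith [hgpos a haI]
    have hBneg : B < 0 := by rw [hBk]; exact hneg b ⟨hab, le_rfl⟩
    exact absurd hAB (not_le.2 (mul_neg_of_pos_of_neg hApos hBneg))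

/-- **Trahan's Cauchy-type theorem.** Let `f, g` be differentiable at every point of
`[a,b]` (one-sidedly at the endpoints), with derivatives `f', g'`, let `g'(x) ≠ 0` on
`[a,b]`, and suppose
`(f'(a)/g'(a) - (f(b)-f(a))/(g(b)-g(a))) · (((g(b)-g(a))/(b-a))·f'(b) - ((f(b)-f(a))/(b-a))·g'(b)) ≥ 0`.
Then there exists `η ∈ (a,b]` with `f'(η)/g'(η) = (f(η) - f(a))/(g(η) - g(a))`. -/
theorem trahan_cauchy_theorem (f f' g g' : ℝ → ℝ) (a b : ℝ) (hab : a < b)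
    (hf : ∀ x ∈ Set.Icc a b, HasDerivWithinAt f (f' x) (Set.Icc a b) x)
    (hg : ∀ x ∈ Set.Icc a b, HasDerivWithinAt g (g' x) (Set.Icc a b) x)
    (hg' : ∀ x ∈ Set.Icc a b, g' x ≠ 0)
    (hcond : (f' a / g' a - (f b - f a) / (g b - g a)) *
        ((g b - g a) / (b - a) * f' b - (f b - f a) / (b - a) * g' b) ≥ 0) :
    ∃ η ∈ Set.Ioc a b, f' η / g' η = (f η - f a) / (g η - g a) := by
  have haI : a ∈ Set.Icc a b := ⟨le_rfl, hab.le⟩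
  rcases (hg' a haI).lt_or_gt with hneg | hpos
  · -- g' < 0 everywhere
    have hgneg : ∀ x ∈ Set.Icc a b, g' x < 0 := by
      intro x hx
      rcases (hg' x hx).lt_or_gt with h | h
      · exact h
      exfalso
      have hax : a < x := hx.1.lt_of_ne (by rintro rfl; linarith)
      have hsub : Set.Icc a x ⊆ Set.Icc a b := Set.Icc_subset_Icc le_rfl hx.2
      obtain ⟨c, hc, hc0⟩ := exists_hasDerivWithinAt_eq_of_gt_of_lt hax.le
        (f' := g') (fun y hy => (hg y (hsub hy)).mono hsub) (m := 0) hneg h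
      exact hg' c (hsub (Set.Ioo_subset_Icc_self hc)) hc0
    have hgpos2 : ∀ x ∈ Set.Icc a b, 0 < -g' x := fun x hx => neg_pos.2 (hgneg x hx)
    have hg2 : ∀ x ∈ Set.Icc a b, HasDerivWithinAt (fun y => -g y) (-g' x) (Set.Icc a b) x :=
      fun x hx => (hg x hx).neg
    have hcond2 : (f' a / -g' a - (f b - f a) / (-g b - -g a)) *
        ((-g b - -g a) / (b - a) * f' b - (f b - f a) / (b - a) * -g' b) ≥ 0 := by
      have e1 : -g b - -g a = -(g b - g a) := by ring
      calc (f' a / -g' a - (f b - f a) / (-g b - -g a)) *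
            ((-g b - -g a) / (b - a) * f' b - (f b - f a) / (b - a) * -g' b)
          = (f' a / g' a - (f b - f a) / (g b - g a)) *
            ((g b - g a) / (b - a) * f' b - (f b - f a) / (b - a) * g' b) := by
            rw [e1, div_neg, div_neg, neg_div]; ring
        _ ≥ 0 := hcond
    obtain ⟨η, hη, heq⟩ := trahan_aux f f' (fun y => -g y) (fun y => -g' y) a b hab
      hf hg2 hgpos2 hcond2
    refine ⟨η, hη, ?_⟩
    have e2 : -g η - -g a = -(g η - g a) := by ring
    rw [e2, div_neg, div_neg, neg_inj] at heq
    exact heq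
  · have hgpos : ∀ x ∈ Set.Icc a b, 0 < g' x := by
      intro x hx
      rcases (hg' x hx).lt_or_gt with h | h
      swap
      · exact h
      exfalso
      have hax : a < x := hx.1.lt_of_ne (by rintro rfl; linarith)
      have hsub : Set.Icc a x ⊆ Set.Icc a b := Set.Icc_subset_Icc le_rfl hx.2
      obtain ⟨c, hc, hc0⟩ := exists_hasDerivWithinAt_eq_of_lt_of_gt hax.le
        (f' := g') (fun y hy => (hg y (hsub hy)).mono hsub) (m := 0) hpos h
      exact hg' c (hsub (Set.Ioo_subset_Icc_self hc)) hc0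
    exact trahan_aux f f' g g' a b hab hf hg hgpos hcond
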